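/- Let n ≥ 2, a > 0, set λ = (π − 2)/(a(π − 4)), and let c be the uniform-node matrix c_{ij} = 1/(n−1) for i ≠ j and c_{ii} = 0. Suppose real numbers ρ¹,…,ρⁿ, q¹,…,qⁿ, γ¹,…,γⁿ satisfy, for every i, both coupling equations: qⁱ − γⁱ + (2a/√(2π))·ρⁱ = −∑_{j=1}^n c_{ij} (qʲ + γʲ − (2a/√(2π))·ρʲ) and ρⁱ + (λ + √(2π)/(a(π−4)))·γⁱ + (2/(√(2π)a))·qⁱ = ∑_{j=1}^n c_{ij} (ρʲ + (−λ + √(2π)/(a(π−4)))·γʲ − (2/(√(2π)a))·qʲ). Then ∑_{i=1}^n qⁱ = 0, ∑_{i=1}^n γⁱ = 0, and for all i, j one has ρⁱ + κ·qⁱ = ρʲ + κ·qʲ, where κ = ((n−2)/n)·(1/a)·(4 + ((n−2)/n)·√(2π))/(√(2π) + 2(n−2)/n). -/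

import Mathlib

set_option maxHeartbeats 1000000 in
/-- Half-moment coupling at a uniform node for the Gaussian BGK model:
flux and layer-amplitude conservation and the coupling invariant ρ + κ·q. -/
theorem halfmoment_coupling_gaussian_invariant (n : ℕ) (hn : 2 ≤ n) (a : ℝ) (ha : 0 < a)
    (lam : ℝ) (hlam : lam = (Real.pi - 2) / (a * (Real.pi - 4)))
    (c : Fin n → Fin n → ℝ)
    (hc : ∀ i j, c i j = if i = j then 0 else 1 / ((n : ℝ) - 1))
    (ρ q γ : Fin n → ℝ)
    (h1 : ∀ i, q i - γ i + (2 * a / Real.sqrt (2 * Real.pi)) * ρ i =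
      -∑ j, c i j * (q j + γ j - (2 * a / Real.sqrt (2 * Real.pi)) * ρ j))
    (h2 : ∀ i, ρ i + (lam + Real.sqrt (2 * Real.pi) / (a * (Real.pi - 4))) * γ i +
        (2 / (Real.sqrt (2 * Real.pi) * a)) * q i =
      ∑ j, c i j * (ρ j + (-lam + Real.sqrt (2 * Real.pi) / (a * (Real.pi - 4))) * γ j -
        (2 / (Real.sqrt (2 * Real.pi) * a)) * q j))
    (κ : ℝ)
    (hκ : κ = (((n : ℝ) - 2) / n) * (1 / a) *
      (4 + (((n : ℝ) - 2) / n) * Real.sqrt (2 * Real.pi)) /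
        (Real.sqrt (2 * Real.pi) + 2 * (((n : ℝ) - 2) / n))) :
    (∑ i, q i = 0) ∧ (∑ i, γ i = 0) ∧
    ∀ i j, ρ i + κ * q i = ρ j + κ * q j := by
  have hπ4 : Real.pi < 4 := by linarith [Real.pi_lt_d2]
  have hπ2 : 2 < Real.pi := by linarith [Real.pi_gt_three]
  set s := Real.sqrt (2 * Real.pi) with hsdef
  have hs0 : 0 < s := by rw [hsdef]; exact Real.sqrt_pos.mpr (by linarith)
  have hs2 : s ^ 2 = 2 * Real.pi := by rw [hsdef]; exact Real.sq_sqrt (by linarith)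
  have hπs : Real.pi = s ^ 2 / 2 := by linarith
  have h2n : (2:ℝ) ≤ (n:ℝ) := by exact_mod_cast hn
  have hn0 : (n:ℝ) ≠ 0 := by linarith
  have hn1 : (n:ℝ) - 1 ≠ 0 := by linarith
  have ha0 : a ≠ 0 := ne_of_gt ha
  have hs0' : s ≠ 0 := ne_of_gt hs0
  have hs24 : s ^ 2 / 2 - 4 ≠ 0 := by intro h; rw [hπs] at hπ4; linarith
  have hπ40 : a * (Real.pi - 4) ≠ 0 := mul_ne_zero ha0 (by linarith)
  -- sum helper
  have hsum : ∀ (x : Fin n → ℝ) (i : Fin n),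
      ∑ j, c i j * x j = ((∑ j, x j) - x i) / ((n:ℝ) - 1) := by
    intro x i
    have key : ∀ j : Fin n, c i j * x j
        = x j / ((n:ℝ)-1) - (if j = i then x i / ((n:ℝ)-1) else 0) := by
      intro j
      rcases eq_or_ne i j with h | h
      · subst h; rw [hc, if_pos rfl, if_pos rfl]; simp
      · rw [hc, if_neg h, if_neg (Ne.symm h), sub_zero]; ring
    calc ∑ j, c i j * x j
        = ∑ j, (x j / ((n:ℝ)-1) - (if j = i then x i / ((n:ℝ)-1) else 0)) :=
          Finset.sum_congr rfl fun j _ => key j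
      _ = (∑ j, x j) / ((n:ℝ)-1) - x i / ((n:ℝ)-1) := by
          rw [Finset.sum_sub_distrib, Finset.sum_ite_eq' Finset.univ i, ← Finset.sum_div]
          simp
      _ = ((∑ j, x j) - x i) / ((n:ℝ)-1) := by rw [sub_div]
  simp only [hsum] at h1 h2
  have hsplit1 : (∑ j, (q j + γ j - 2 * a / s * ρ j))
      = (∑ j, q j) + (∑ j, γ j) - 2 * a / s * (∑ j, ρ j) := by
    rw [Finset.sum_sub_distrib, Finset.sum_add_distrib, Finset.mul_sum]
  have hsplit2 : (∑ j, (ρ j + (-lam + s / (a * (Real.pi - 4))) * γ j - 2 / (s * a) * q j))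
      = (∑ j, ρ j) + (-lam + s / (a * (Real.pi - 4))) * (∑ j, γ j)
        - 2 / (s * a) * (∑ j, q j) := by
    rw [Finset.sum_sub_distrib, Finset.sum_add_distrib, Finset.mul_sum, Finset.mul_sum]
  simp only [hsplit1] at h1
  simp only [hsplit2] at h2
  have hA : ∀ i, (q i - γ i + 2 * a / s * ρ i) * ((n:ℝ) - 1)
      = -(((∑ j, q j) + (∑ j, γ j) - 2 * a / s * (∑ j, ρ j))
          - (q i + γ i - 2 * a / s * ρ i)) := by
    intro i
    have h := h1 i
    rw [← neg_div, eq_div_iff hn1] at h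
    exact h
  have hB : ∀ i, (ρ i + (lam + s / (a * (Real.pi - 4))) * γ i + 2 / (s * a) * q i) * ((n:ℝ) - 1)
      = ((∑ j, ρ j) + (-lam + s / (a * (Real.pi - 4))) * (∑ j, γ j) - 2 / (s * a) * (∑ j, q j))
          - (ρ i + (-lam + s / (a * (Real.pi - 4))) * γ i - 2 / (s * a) * q i) := by
    intro i
    have h := h2 i
    rw [eq_div_iff hn1] at h
    exact h
  have hA' := Finset.sum_congr rfl (fun i (_ : i ∈ Finset.univ) => hA i)
  have hB' := Finset.sum_congr rfl (fun i (_ : i ∈ Finset.univ) => hB i)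
  simp only [Finset.sum_sub_distrib, Finset.sum_add_distrib, ← Finset.sum_mul,
    ← Finset.mul_sum, Finset.sum_neg_distrib, Finset.sum_const, Finset.card_univ,
    Fintype.card_fin, nsmul_eq_mul] at hA' hB'
  have hq : (∑ i, q i) = 0 := by
    have h' : (∑ i, q i) * (2 * ((n:ℝ) - 1)) = 0 := by linear_combination hA'
    exact (mul_eq_zero.mp h').resolve_right (by intro h; apply hn1; linarith)
  have hlam0 : lam ≠ 0 := by
    rw [hlam]; exact div_ne_zero (by linarith) hπ40
  have hg : (∑ i, γ i) = 0 := by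
    have h' : (∑ i, γ i) * (2 * lam * ((n:ℝ) - 1)) = 0 := by
      linear_combination hB' - 2 * (2 / (s * a)) * ((n:ℝ) - 1) * hq
    rcases mul_eq_zero.mp h' with h | h
    · exact h
    · exact absurd h (by
        rcases mul_eq_zero.mp · with h | h
        · rcases mul_eq_zero.mp h with h | h
          · norm_num at h
          · exact hlam0 h
        · exact hn1 (by linarith))
  set L : ℝ := ((n:ℝ) - 2) * lam + (n:ℝ) * (s / (a * (Real.pi - 4))) with hLdef
  have e1 : ∀ i, γ i * (n:ℝ)
      = ((n:ℝ) - 2) * q i + (n:ℝ) * (2 * a / s) * ρ i - (2 * a / s) * (∑ j, ρ j) := by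
    intro i
    linear_combination -(hA i) + hq + hg
  have e2 : ∀ i, ρ i * (n:ℝ) + L * γ i + ((n:ℝ) - 2) * (2 / (s * a)) * q i = ∑ j, ρ j := by
    intro i
    linear_combination hB i + (-lam + s / (a * (Real.pi - 4))) * hg - (2 / (s * a)) * hq
  have e3 : ∀ i, ((n:ℝ) ^ 2 + L * (n:ℝ) * (2 * a / s)) * ρ i
      + ((n:ℝ) - 2) * (L + (n:ℝ) * (2 / (s * a))) * q i
      = ((n:ℝ) + L * (2 * a / s)) * (∑ j, ρ j) := by
    intro i
    linear_combination (n:ℝ) * e2 i - L * e1 i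
  have h8 : s ^ 2 - 8 ≠ 0 := by intro h; linarith
  have h8' : s ^ 2 - 2 * 4 ≠ 0 := by intro h; exact h8 (by linarith)
  have hden : s + 2 * (((n:ℝ) - 2) / (n:ℝ)) ≠ 0 := by
    have : 0 ≤ ((n:ℝ) - 2) / (n:ℝ) := div_nonneg (by linarith) (by linarith)
    nlinarith
  have hns1 : s * (n:ℝ) + 2 * ((n:ℝ) - 2) ≠ 0 := by nlinarith
  have hns2 : (n:ℝ) * s + 2 * ((n:ℝ) - 2) ≠ 0 := by nlinarith
  have hκval : κ = (((n:ℝ) - 2) * (4 * (n:ℝ) + ((n:ℝ) - 2) * s))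
      / ((n:ℝ) * a * (s * (n:ℝ) + 2 * ((n:ℝ) - 2))) := by
    rw [hκ, div_eq_div_iff hden (mul_ne_zero (mul_ne_zero hn0 ha0) hns1)]
    field_simp
  have hLval : L = (((n:ℝ) - 2) * (s ^ 2 / 2 - 2) + (n:ℝ) * s) / (a * (s ^ 2 / 2 - 4)) := by
    rw [hLdef, hlam, hπs, mul_div_assoc', mul_div_assoc', ← add_div]
  have hκeq : κ * ((n:ℝ) * ((n:ℝ) + L * (2 * a / s)))
      = ((n:ℝ) - 2) * (L + (n:ℝ) * (2 / (s * a))) := by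
    rw [hκval, hLval]
    field_simp
    ring
  have hD : (n:ℝ) + L * (2 * a / s) ≠ 0 := by
    have hval : (n:ℝ) + L * (2 * a / s)
        = ((s ^ 2 / 2 - 2) * ((n:ℝ) * s + 2 * ((n:ℝ) - 2))) / (s * (s ^ 2 / 2 - 4)) := by
      rw [hLval]
      field_simp
      ring
    rw [hval]
    apply div_ne_zero
    · apply mul_ne_zero
      · rw [hπs] at hπ2; intro h; linarith
      · exact hns2
    · exact mul_ne_zero hs0' hs24
  have key2 : ∀ i, ρ i + κ * q i = (∑ j, ρ j) / (n:ℝ) := by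
    intro i
    rw [eq_div_iff hn0]
    apply mul_left_cancel₀ hD
    linear_combination e3 i + q i * hκeq
  exact ⟨hq, hg, fun i j => by rw [key2 i, key2 j]⟩
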